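/- Let Γ be an infinite, torsion-free, finitely generated group with finite symmetric generating set S, and let X be the Cayley graph (Γ, S). Then the isometry group of X has no non-trivial compact (equivalently, for graphs, no non-trivial finite-orbit) normal subgroup: if K is a normal subgroup of Isom(X) such that some vertex x has Kx ≠ {x} and all K-orbits are finite, a contradiction arises. In particular, any normal subgroup of Isom(X) all of whose vertex-orbits are finite must act trivially. -/

import Mathlib

variable {Γ : Type*} [Group Γ]

/-- The Cayley graph of `Γ` with respect to a (symmetric) set `S`. -/
def cayleyGraph (Γ : Type*) [Group Γ] (S : Set Γ) : SimpleGraph Γ where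
  Adj g h := g ≠ h ∧ (g⁻¹ * h ∈ S ∨ h⁻¹ * g ∈ S)
  symm := by
    refine ⟨?_⟩
    rintro g h ⟨hne, h1⟩
    exact ⟨hne.symm, h1.symm⟩
  loopless := by refine ⟨?_⟩; rintro g ⟨hne, -⟩; exact hne rfl

/-- Left multiplication by `a` is an automorphism of the Cayley graph. -/
def cayleyLeftMul (S : Set Γ) (a : Γ) :
    cayleyGraph Γ S ≃g cayleyGraph Γ S where
  toEquiv := Equiv.mulLeft a
  map_rel_iff' := by
    intro g h
    show (a * g ≠ a * h ∧ _) ↔ (g ≠ h ∧ _)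
    have h1 : (a * g)⁻¹ * (a * h) = g⁻¹ * h := by group
    have h2 : (a * h)⁻¹ * (a * g) = h⁻¹ * g := by group
    simp only [Equiv.coe_mulLeft] at *
    rw [h1, h2]
    simp

/-- Let `Γ` be an infinite, torsion-free, finitely generated group with finite
symmetric generating set `S`, and `X = (Γ, S)` its Cayley graph. Any normal
subgroup `K` of the isometry (automorphism) group of `X` all of whose
vertex-orbits are finite acts trivially; in particular `Isom(X)` has no
non-trivial compact normal subgroup. -/
theorem no_nontrivial_finite_orbit_normal_subgroup
    (hΓinf : Infinite Γ)
    (htf : ∀ g : Γ, g ≠ 1 → ¬ IsOfFinOrder g)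
    (S : Finset Γ) (hsymm : ∀ s ∈ S, s⁻¹ ∈ S) (hid : (1 : Γ) ∉ S)
    (hgen : Subgroup.closure (S : Set Γ) = ⊤)
    (K : Set (cayleyGraph Γ (S : Set Γ) ≃g cayleyGraph Γ (S : Set Γ)))
    (hK_id : RelIso.refl _ ∈ K)
    (hK_mul : ∀ σ τ, σ ∈ K → τ ∈ K → σ.trans τ ∈ K)
    (hK_inv : ∀ σ, σ ∈ K → σ.symm ∈ K)
    (hK_normal : ∀ (φ : cayleyGraph Γ (S : Set Γ) ≃g cayleyGraph Γ (S : Set Γ)),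
      ∀ σ ∈ K, (φ.symm.trans σ).trans φ ∈ K)
    (horb : ∀ x : Γ, {y : Γ | ∃ σ ∈ K, σ x = y}.Finite) :
    ∀ σ ∈ K, ∀ x : Γ, σ x = x := by
  intro σ hσ x
  set g := σ x * x⁻¹ with hg
  have hgx : g * x = σ x := by rw [hg]; group
  -- every power of `g` moves `x` inside the (finite) K-orbit of `x`
  have key : ∀ n : ℕ, ∃ τ ∈ K, τ x = g ^ n * x := by
    intro n
    induction n with
    | zero => exact ⟨RelIso.refl _, hK_id, by simp⟩
    | succ n ih =>
      obtain ⟨τ, hτ, hτx⟩ := ih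
      set φ := cayleyLeftMul (S : Set Γ) g with hφ
      refine ⟨σ.trans ((φ.symm.trans τ).trans φ),
        hK_mul _ _ hσ (hK_normal φ τ hτ), ?_⟩
      show φ (τ (φ.symm (σ x))) = g ^ (n + 1) * x
      have h1 : φ.symm (σ x) = x := by
        show g⁻¹ * σ x = x
        rw [← hgx]; group
      rw [h1, hτx]
      show g * (g ^ n * x) = g ^ (n + 1) * x
      rw [← mul_assoc, ← pow_succ']
  have hmaps : Set.MapsTo (fun n : ℕ => g ^ n * x) Set.univ
      {y : Γ | ∃ σ ∈ K, σ x = y} := by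
    intro n _
    exact key n
  obtain ⟨m, -, n, -, hmn, heq⟩ :=
    Set.infinite_univ.exists_ne_map_eq_of_mapsTo hmaps (horb x)
  have hpow : g ^ m = g ^ n := mul_right_cancel heq
  have hg1 : g = 1 := by
    by_contra hne
    apply htf g hne
    rw [isOfFinOrder_iff_pow_eq_one]
    rcases hmn.lt_or_gt with h | h
    · refine ⟨n - m, by omega, ?_⟩
      have : g ^ m * g ^ (n - m) = g ^ m * 1 := by
        rw [← pow_add, Nat.add_sub_cancel' h.le, ← hpow, mul_one]
      exact mul_left_cancel this
    · refine ⟨m - n, by omega, ?_⟩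
      have : g ^ n * g ^ (m - n) = g ^ n * 1 := by
        rw [← pow_add, Nat.add_sub_cancel' h.le, hpow, mul_one]
      exact mul_left_cancel this
  rw [hg1, one_mul] at hgx
  exact hgx.symm
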